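/- Let H be a Hopf algebra, let A and B be H-module algebras, and let τ : B⊗A → A⊗B be a twisting map that is an H-module homomorphism (where H acts diagonally on tensor products). Then the twisted tensor product A⊗^τB, with multiplication m_τ = (m_A⊗m_B)∘(id_A⊗τ⊗id_B) and diagonal H-action, is an H-module algebra. -/

import Mathlib

open TensorProduct

section ModuleAlgebra

variable (k : Type*) [Field k] {H : Type*} [Ring H] [Bialgebra k H]

/-- Given an action `act` of a bialgebra `H` on a `k`-module `X` equipped with a
bilinear multiplication `μ` and unit `e`, this says that `X` is an `H`-module algebra:
`1·x = x`, `(hh')·x = h·(h'·x)`, `h·e = ε(h)e`, and the Sweedler condition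
`h·(xy) = ∑ (h₁·x)(h₂·y)` (expressed via `comul`). -/
def IsModuleAlgebraWithMul {X : Type*} [AddCommGroup X] [Module k X]
    (act : H →ₗ[k] X →ₗ[k] X) (μ : X →ₗ[k] X →ₗ[k] X) (e : X) : Prop :=
  (∀ x : X, act 1 x = x) ∧
  (∀ (h h' : H) (x : X), act (h * h') x = act h (act h' x)) ∧
  (∀ h : H, act h e = Coalgebra.counit (R := k) h • e) ∧
  (∀ (h : H) (x y : X),
    act h (μ x y) =
      (TensorProduct.lift ((μ.compl₂ (act.flip y)) ∘ₗ (act.flip x)))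
        (Coalgebra.comul (R := k) h))

/-- The diagonal action `h·(x⊗y) = ∑ (h₁·x)⊗(h₂·y)` of `H` on a tensor product. -/
noncomputable def diagAct {X Y : Type*} [AddCommGroup X] [Module k X]
    [AddCommGroup Y] [Module k Y]
    (actX : H →ₗ[k] X →ₗ[k] X) (actY : H →ₗ[k] Y →ₗ[k] Y) :
    H →ₗ[k] (X ⊗[k] Y) →ₗ[k] (X ⊗[k] Y) :=
  (TensorProduct.homTensorHomMap (RingHom.id k) X Y X Y) ∘ₗ (TensorProduct.map actX actY) ∘ₗ
    Coalgebra.comul (R := k)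

end ModuleAlgebra

section Helpers

variable {k : Type*} [Field k] {H : Type*} [Ring H] [Bialgebra k H]
variable {X Y Z X' Y' : Type*}
  [AddCommGroup X] [Module k X] [AddCommGroup Y] [Module k Y]
  [AddCommGroup Z] [Module k Z] [AddCommGroup X'] [Module k X'] [AddCommGroup Y'] [Module k Y']


lemma htHH (actX : H →ₗ[k] X →ₗ[k] X) (actY : H →ₗ[k] Y →ₗ[k] Y)
    (w : H ⊗[k] H) (x : X) (y : Y) :
    TensorProduct.homTensorHomMap (RingHom.id k) X Y X Y (TensorProduct.map actX actY w) (x ⊗ₜ[k] y)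
      = TensorProduct.map (actX.flip x) (actY.flip y) w := by
  induction w with
  | zero => simp
  | tmul g g' => simp
  | add u v hu hv => simp [map_add, LinearMap.add_apply, hu, hv]

lemma diagAct_tmul (actX : H →ₗ[k] X →ₗ[k] X) (actY : H →ₗ[k] Y →ₗ[k] Y)
    (h : H) (x : X) (y : Y) :
    diagAct k actX actY h (x ⊗ₜ[k] y)
      = TensorProduct.map (actX.flip x) (actY.flip y) (Coalgebra.comul (R := k) h) := by
  simp only [diagAct, LinearMap.comp_apply]
  exact htHH actX actY _ x y

def Eqv (actX : H →ₗ[k] X →ₗ[k] X) (actY : H →ₗ[k] Y →ₗ[k] Y) (f : X →ₗ[k] Y) : Prop :=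
  ∀ (h : H) (x : X), f (actX h x) = actY h (f x)

lemma Eqv.id (actX : H →ₗ[k] X →ₗ[k] X) : Eqv actX actX (LinearMap.id (R := k)) :=
  fun _ _ => rfl

lemma Eqv.comp {actX : H →ₗ[k] X →ₗ[k] X} {actY : H →ₗ[k] Y →ₗ[k] Y} {actZ : H →ₗ[k] Z →ₗ[k] Z}
    {f : X →ₗ[k] Y} {g : Y →ₗ[k] Z} (hf : Eqv actX actY f) (hg : Eqv actY actZ g) :
    Eqv actX actZ (g ∘ₗ f) := fun h x => by
  simp [LinearMap.comp_apply, hf h x, hg h (f x)]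

lemma Eqv.equivSymm {actX : H →ₗ[k] X →ₗ[k] X} {actY : H →ₗ[k] Y →ₗ[k] Y}
    (e : X ≃ₗ[k] Y) (he : Eqv actX actY e.toLinearMap) :
    Eqv actY actX e.symm.toLinearMap := fun h y => by
  have this := he h (e.symm y)
  simp only [LinearEquiv.coe_coe, e.apply_symm_apply] at this
  simp only [LinearEquiv.coe_coe]
  rw [← this, e.symm_apply_apply]

lemma Eqv.tmap {actX : H →ₗ[k] X →ₗ[k] X} {actX' : H →ₗ[k] X' →ₗ[k] X'}
    {actY : H →ₗ[k] Y →ₗ[k] Y} {actY' : H →ₗ[k] Y' →ₗ[k] Y'}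
    {f : X →ₗ[k] Y} {g : X' →ₗ[k] Y'}
    (hf : Eqv actX actY f) (hg : Eqv actX' actY' g) :
    Eqv (diagAct k actX actX') (diagAct k actY actY') (TensorProduct.map f g) := by
  intro h t
  induction t with
  | zero => simp
  | add u v hu hv => simp [map_add, hu, hv]
  | tmul x x' =>
    have e1 : f ∘ₗ actX.flip x = actY.flip (f x) := by
      ext h'; exact hf h' x
    have e2 : g ∘ₗ actX'.flip x' = actY'.flip (g x') := by
      ext h'; exact hg h' x'
    rw [diagAct_tmul, TensorProduct.map_tmul, diagAct_tmul, ← LinearMap.comp_apply,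
      ← TensorProduct.map_comp, e1, e2]


lemma Eqv.assoc (actX : H →ₗ[k] X →ₗ[k] X) (actY : H →ₗ[k] Y →ₗ[k] Y)
    (actZ : H →ₗ[k] Z →ₗ[k] Z) :
    Eqv (diagAct k (diagAct k actX actY) actZ) (diagAct k actX (diagAct k actY actZ))
      (TensorProduct.assoc k X Y Z).toLinearMap := by
  intro h t
  induction t with
  | zero => simp
  | add u v hu hv => simp only [map_add, hu, hv]
  | tmul p z =>
    induction p with
    | zero => simp
    | add u v hu hv => simp only [TensorProduct.add_tmul, map_add, hu, hv]
    | tmul x y =>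
      have e1 : (diagAct k actX actY).flip (x ⊗ₜ[k] y)
          = (TensorProduct.map (actX.flip x) (actY.flip y)) ∘ₗ Coalgebra.comul (R := k) := by
        ext h'; simp [LinearMap.flip_apply, diagAct_tmul]
      have e2 : (diagAct k actY actZ).flip (y ⊗ₜ[k] z)
          = (TensorProduct.map (actY.flip y) (actZ.flip z)) ∘ₗ Coalgebra.comul (R := k) := by
        ext h'; simp [LinearMap.flip_apply, diagAct_tmul]
      have nat : (TensorProduct.assoc k X Y Z).toLinearMap ∘ₗ
            TensorProduct.map (TensorProduct.map (actX.flip x) (actY.flip y)) (actZ.flip z)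
          = TensorProduct.map (actX.flip x) (TensorProduct.map (actY.flip y) (actZ.flip z)) ∘ₗ
            (TensorProduct.assoc k H H H).toLinearMap := by
        apply TensorProduct.ext_threefold
        intro a b c; simp
      have co : (TensorProduct.assoc k H H H).toLinearMap
            (TensorProduct.map (Coalgebra.comul (R := k)) LinearMap.id (Coalgebra.comul (R := k) h))
          = TensorProduct.map LinearMap.id (Coalgebra.comul (R := k)) (Coalgebra.comul (R := k) h) := by
        have := Coalgebra.coassoc_apply (R := k) h
        simpa [LinearMap.rTensor, LinearMap.lTensor, LinearEquiv.coe_coe] using this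
      have d1 : TensorProduct.map ((TensorProduct.map (actX.flip x) (actY.flip y)) ∘ₗ
              Coalgebra.comul (R := k)) (actZ.flip z)
          = TensorProduct.map (TensorProduct.map (actX.flip x) (actY.flip y)) (actZ.flip z) ∘ₗ
            TensorProduct.map (Coalgebra.comul (R := k)) LinearMap.id := by
        rw [← TensorProduct.map_comp, LinearMap.comp_id]
      have d2 : TensorProduct.map (actX.flip x) ((TensorProduct.map (actY.flip y) (actZ.flip z)) ∘ₗ
              Coalgebra.comul (R := k))
          = TensorProduct.map (actX.flip x) (TensorProduct.map (actY.flip y) (actZ.flip z)) ∘ₗ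
            TensorProduct.map LinearMap.id (Coalgebra.comul (R := k)) := by
        rw [← TensorProduct.map_comp, LinearMap.comp_id]
      rw [diagAct_tmul, e1, d1, LinearMap.comp_apply,
        ← LinearMap.comp_apply ((TensorProduct.assoc k X Y Z).toLinearMap), nat,
        LinearMap.comp_apply, co]
      simp only [LinearEquiv.coe_coe, TensorProduct.assoc_tmul]
      rw [diagAct_tmul, e2, d2, LinearMap.comp_apply]

end Helpers

section Helpers2

variable {k : Type*} [Field k] {H : Type*} [Ring H] [Bialgebra k H]

lemma eqv_mul {A : Type*} [Ring A] [Algebra k A] (actA : H →ₗ[k] A →ₗ[k] A)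
    (hA : IsModuleAlgebraWithMul k actA (LinearMap.mul k A) 1) :
    Eqv (diagAct k actA actA) actA (TensorProduct.lift (LinearMap.mul k A)) := by
  intro h t
  induction t with
  | zero => simp
  | add u v hu hv => simp [map_add, hu, hv]
  | tmul a a' =>
    have key : TensorProduct.lift (((LinearMap.mul k A).compl₂ (actA.flip a')) ∘ₗ actA.flip a)
        = TensorProduct.lift (LinearMap.mul k A) ∘ₗ
            TensorProduct.map (actA.flip a) (actA.flip a') := by
      apply TensorProduct.ext'
      intro g g'
      simp
    rw [diagAct_tmul, TensorProduct.lift.tmul, hA.2.2.2 h a a', key, LinearMap.comp_apply]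

/-- The map `(A⊗B)⊗(A⊗B) → A⊗B` given by
`(a⊗b)⊗(a'⊗b') ↦ (m_A⊗m_B)(a ⊗ τ(b⊗a') ⊗ b')`. -/
noncomputable def twistF (k : Type*) [Field k] {A B : Type*} [Ring A] [Algebra k A]
    [Ring B] [Algebra k B] (τ : B ⊗[k] A →ₗ[k] A ⊗[k] B) :
    (A ⊗[k] B) ⊗[k] (A ⊗[k] B) →ₗ[k] A ⊗[k] B :=
  TensorProduct.map (TensorProduct.lift (LinearMap.mul k A))
      (TensorProduct.lift (LinearMap.mul k B)) ∘ₗ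
    (TensorProduct.assoc k A A (B ⊗[k] B)).symm.toLinearMap ∘ₗ
    (TensorProduct.map LinearMap.id
      ((TensorProduct.assoc k A B B).toLinearMap ∘ₗ (TensorProduct.map τ LinearMap.id) ∘ₗ
        (TensorProduct.assoc k B A B).symm.toLinearMap)) ∘ₗ
    (TensorProduct.assoc k A B (A ⊗[k] B)).toLinearMap

set_option synthInstance.maxHeartbeats 400000 in
set_option maxHeartbeats 1000000 in
lemma twistF_tmul {A B : Type*} [Ring A] [Algebra k A]
    [Ring B] [Algebra k B] (τ : B ⊗[k] A →ₗ[k] A ⊗[k] B) (a a' : A) (b b' : B) :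
    twistF k τ ((a ⊗ₜ[k] b) ⊗ₜ[k] (a' ⊗ₜ[k] b'))
      = (a ⊗ₜ[k] (1 : B)) * τ (b ⊗ₜ[k] a') * ((1 : A) ⊗ₜ[k] b') := by
  simp only [twistF, LinearMap.comp_apply, LinearEquiv.coe_coe, TensorProduct.assoc_tmul,
    TensorProduct.map_tmul, TensorProduct.assoc_symm_tmul, LinearMap.id_coe, id_eq]
  generalize τ (b ⊗ₜ[k] a') = t
  induction t with
  | zero => simp
  | add u v hu hv =>
    simp only [TensorProduct.add_tmul, TensorProduct.tmul_add, map_add, hu, hv, mul_add, add_mul]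
  | tmul ta tb =>
    simp [Algebra.TensorProduct.tmul_mul_tmul]

end Helpers2


/-- Let `H` be a bialgebra (e.g. the underlying bialgebra of a Hopf algebra), let
`A` and `B` be `H`-module algebras, and let `τ : B⊗A → A⊗B` be a twisting map that
is an `H`-module homomorphism for the diagonal actions. Then the twisted tensor
product `A⊗^τB`, with multiplication `m_τ = (m_A⊗m_B)∘(id_A⊗τ⊗id_B)` (whose bilinear
form `M` satisfies `M (a⊗b) (a'⊗b') = (a⊗1)·τ(b⊗a')·(1⊗b')`) and the diagonal
`H`-action, is an `H`-module algebra. -/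
theorem twisted_tensor_product_module_algebra
    (k H A B : Type*) [Field k] [Ring H] [Bialgebra k H]
    [Ring A] [Algebra k A] [Ring B] [Algebra k B]
    (actA : H →ₗ[k] A →ₗ[k] A) (actB : H →ₗ[k] B →ₗ[k] B)
    (hA : IsModuleAlgebraWithMul k actA (LinearMap.mul k A) 1)
    (hB : IsModuleAlgebraWithMul k actB (LinearMap.mul k B) 1)
    (τ : B ⊗[k] A →ₗ[k] A ⊗[k] B)
    (hτB : ∀ b : B, τ (b ⊗ₜ[k] (1 : A)) = (1 : A) ⊗ₜ[k] b)
    (hτA : ∀ a : A, τ ((1 : B) ⊗ₜ[k] a) = a ⊗ₜ[k] (1 : B))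
    (M : A ⊗[k] B →ₗ[k] A ⊗[k] B →ₗ[k] A ⊗[k] B)
    (hM : ∀ (a a' : A) (b b' : B),
      M (a ⊗ₜ[k] b) (a' ⊗ₜ[k] b') =
        (a ⊗ₜ[k] (1 : B)) * τ (b ⊗ₜ[k] a') * ((1 : A) ⊗ₜ[k] b'))
    (hassoc : ∀ (b b' : B) (a a' : A),
      τ ((b * b') ⊗ₜ[k] (a * a')) =
        TensorProduct.lift M (TensorProduct.map τ τ
          ((TensorProduct.assoc k B A (B ⊗[k] A)).symm
            (b ⊗ₜ[k] ((TensorProduct.assoc k A B A) ((τ (b' ⊗ₜ[k] a)) ⊗ₜ[k] a'))))))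
    (hτH : ∀ (h : H) (t : B ⊗[k] A),
      τ (diagAct k actB actA h t) = diagAct k actA actB h (τ t)) :
    IsModuleAlgebraWithMul k (diagAct k actA actB) M ((1 : A) ⊗ₜ[k] (1 : B)) := by
  have hτ : Eqv (diagAct k actB actA) (diagAct k actA actB) τ := fun h t => hτH h t
  refine ⟨?_, ?_, ?_, ?_⟩
  · -- unitality of the action
    intro x
    induction x with
    | zero => simp
    | add u v hu hv => simp [map_add, hu, hv]
    | tmul a b =>
      rw [diagAct_tmul, Bialgebra.comul_one, Algebra.TensorProduct.one_def,
        TensorProduct.map_tmul]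
      simp [LinearMap.flip_apply, hA.1, hB.1]
  · -- multiplicativity of the action
    intro h h' x
    induction x with
    | zero => simp
    | add u v hu hv => simp [map_add, hu, hv]
    | tmul a b =>
      have step : ∀ w : H ⊗[k] H,
          diagAct k actA actB h (TensorProduct.map (actA.flip a) (actB.flip b) w)
            = TensorProduct.map (actA.flip a) (actB.flip b)
                (Coalgebra.comul (R := k) h * w) := by
        intro w
        induction w with
        | zero => simp
        | add u v hu hv => simp only [map_add, mul_add, hu, hv]
        | tmul g g' =>
          rw [TensorProduct.map_tmul, diagAct_tmul]
          generalize Coalgebra.comul (R := k) h = v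
          induction v with
          | zero => simp
          | add u₁ u₂ h1 h2 => simp only [add_mul, map_add, h1, h2]
          | tmul f f' =>
            simp [Algebra.TensorProduct.tmul_mul_tmul, LinearMap.flip_apply,
              hA.2.1, hB.2.1]
      rw [diagAct_tmul, diagAct_tmul, step (Coalgebra.comul (R := k) h'),
        Bialgebra.comul_mul]
  · -- the unit of A⊗B
    intro h
    rw [diagAct_tmul]
    have e1 : actA.flip (1 : A) = (Algebra.linearMap k A) ∘ₗ (Coalgebra.counit (R := k)) := by
      ext g
      simp [LinearMap.flip_apply, hA.2.2.1 g, Algebra.algebraMap_eq_smul_one]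
    have e2 : actB.flip (1 : B) = (Algebra.linearMap k B) ∘ₗ (Coalgebra.counit (R := k)) := by
      ext g
      simp [LinearMap.flip_apply, hB.2.2.1 g, Algebra.algebraMap_eq_smul_one]
    have e3 : TensorProduct.map (Coalgebra.counit (R := k)) (Coalgebra.counit (R := k))
        (Coalgebra.comul (R := k) h) = (1 : k) ⊗ₜ[k] (Coalgebra.counit (R := k) h) := by
      have h1 : TensorProduct.map (Coalgebra.counit (R := k) (A := H)) (Coalgebra.counit (R := k) (A := H))
          = TensorProduct.map (LinearMap.id : k →ₗ[k] k) (Coalgebra.counit (R := k) (A := H)) ∘ₗ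
              TensorProduct.map (Coalgebra.counit (R := k) (A := H)) (LinearMap.id : H →ₗ[k] H) := by
        rw [← TensorProduct.map_comp]
        simp
      have h2 := Coalgebra.rTensor_counit_comul (R := k) h
      simp only [LinearMap.rTensor] at h2
      rw [h1, LinearMap.comp_apply, h2, TensorProduct.map_tmul]
      simp
    rw [e1, e2, TensorProduct.map_comp, LinearMap.comp_apply, e3, TensorProduct.map_tmul]
    simp [Algebra.algebraMap_eq_smul_one, TensorProduct.tmul_smul]
  · -- the Sweedler condition
    intro h x y
    have key : TensorProduct.lift ((M.compl₂ ((diagAct k actA actB).flip y)) ∘ₗ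
          (diagAct k actA actB).flip x)
        = TensorProduct.lift M ∘ₗ
            TensorProduct.map ((diagAct k actA actB).flip x) ((diagAct k actA actB).flip y) := by
      apply TensorProduct.ext'
      intro g g'
      simp
    have hEq : TensorProduct.lift M = twistF k τ := by
      apply TensorProduct.ext'
      intro p q
      induction p with
      | zero => simp
      | add u v hu hv => simp only [TensorProduct.add_tmul, map_add, hu, hv]
      | tmul a b =>
        induction q with
        | zero => simp
        | add u v hu hv => simp only [TensorProduct.tmul_add, map_add, hu, hv]
        | tmul a' b' =>
          rw [TensorProduct.lift.tmul, hM, twistF_tmul]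
    have hG : Eqv (diagAct k actB (diagAct k actA actB))
        (diagAct k actA (diagAct k actB actB))
        ((TensorProduct.assoc k A B B).toLinearMap ∘ₗ (TensorProduct.map τ LinearMap.id) ∘ₗ
          (TensorProduct.assoc k B A B).symm.toLinearMap) :=
      Eqv.comp (Eqv.comp (Eqv.equivSymm _ (Eqv.assoc actB actA actB))
        (Eqv.tmap hτ (Eqv.id actB))) (Eqv.assoc actA actB actB)
    have hF : Eqv (diagAct k (diagAct k actA actB) (diagAct k actA actB))
        (diagAct k actA actB) (twistF k τ) :=
      Eqv.comp (Eqv.comp (Eqv.comp (Eqv.assoc actA actB (diagAct k actA actB))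
        (Eqv.tmap (Eqv.id actA) hG))
        (Eqv.equivSymm _ (Eqv.assoc actA actA (diagAct k actB actB))))
        (Eqv.tmap (eqv_mul actA hA) (eqv_mul actB hB))
    rw [key, LinearMap.comp_apply, ← diagAct_tmul, hEq, hF h (x ⊗ₜ[k] y), ← hEq,
      TensorProduct.lift.tmul]
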